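/- Let b, c ∈ ℝ and define θ(x,y,t) = c x + (2b² − c²) y + (6 b² c − c³) t. Then the plane-wave functions q = b e^{iθ} and r = b e^{−iθ} satisfy the second and third AKNS flows: i q_y = −q_{xx} − 2 q² r, i r_y = r_{xx} + 2 q r², q_t = q_{xxx} + 6 q_x q r and r_t = r_{xxx} + 6 q r r_x on all of ℝ³. -/

import Mathlib

open Complex

/-- Partial derivative in the first (`x`) variable. -/
noncomputable def pdx {E : Type*} [NormedAddCommGroup E] [NormedSpace ℝ E]
    (f : ℝ × ℝ × ℝ → E) (p : ℝ × ℝ × ℝ) : E :=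
  deriv (fun s => f (s, p.2.1, p.2.2)) p.1

/-- Partial derivative in the second (`y`) variable. -/
noncomputable def pdy {E : Type*} [NormedAddCommGroup E] [NormedSpace ℝ E]
    (f : ℝ × ℝ × ℝ → E) (p : ℝ × ℝ × ℝ) : E :=
  deriv (fun s => f (p.1, s, p.2.2)) p.2.1

/-- Partial derivative in the third (`t`) variable. -/
noncomputable def pdt {E : Type*} [NormedAddCommGroup E] [NormedSpace ℝ E]
    (f : ℝ × ℝ × ℝ → E) (p : ℝ × ℝ × ℝ) : E :=
  deriv (fun s => f (p.1, p.2.1, s)) p.2.2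

/-- The plane-wave phase `θ(x,y,t) = c x + (2b² − c²) y + (6b²c − c³) t`. -/
def planeTheta (b c : ℝ) (p : ℝ × ℝ × ℝ) : ℝ :=
  c * p.1 + (2 * b ^ 2 - c ^ 2) * p.2.1 + (6 * b ^ 2 * c - c ^ 3) * p.2.2

lemma hasDerivAt_wave (b' w k : ℂ) (s : ℝ) :
    HasDerivAt (fun s : ℝ => b' * Complex.exp (w * s + k))
      (w * (b' * Complex.exp (w * s + k))) s := by
  have h1 : HasDerivAt (fun s : ℝ => w * (s : ℂ) + k) w s := by
    simpa using ((Complex.ofRealCLM.hasDerivAt (x := s)).const_mul w).add_const k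
  have h2 := (Complex.hasDerivAt_exp (w * s + k)).comp s h1
  have := h2.const_mul b'
  exact this.congr_deriv (by ring)

lemma pdx_wave (b c : ℝ) (b' ε : ℂ) (p : ℝ × ℝ × ℝ) :
    pdx (fun p => b' * Complex.exp (ε * (planeTheta b c p : ℂ))) p
      = (ε * c * b') * Complex.exp (ε * (planeTheta b c p : ℂ)) := by
  unfold pdx
  have h : (fun s : ℝ => b' * Complex.exp (ε * (planeTheta b c (s, p.2.1, p.2.2) : ℂ)))
      = fun s : ℝ => b' * Complex.exp ((ε * c) * s +
          ε * (((2 * b ^ 2 - c ^ 2) * p.2.1 + (6 * b ^ 2 * c - c ^ 3) * p.2.2 : ℝ) : ℂ)) := by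
    funext s
    congr 1
    simp only [planeTheta]
    push_cast
    ring_nf
  rw [h, (hasDerivAt_wave b' (ε * c) _ p.1).deriv]
  have h2 : (ε * ↑c) * (p.1 : ℂ) +
      ε * (((2 * b ^ 2 - c ^ 2) * p.2.1 + (6 * b ^ 2 * c - c ^ 3) * p.2.2 : ℝ) : ℂ)
      = ε * (planeTheta b c p : ℂ) := by
    simp only [planeTheta]; push_cast; ring
  rw [h2]; ring_nf

lemma pdy_wave (b c : ℝ) (b' ε : ℂ) (p : ℝ × ℝ × ℝ) :
    pdy (fun p => b' * Complex.exp (ε * (planeTheta b c p : ℂ))) p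
      = (ε * ((2 * b ^ 2 - c ^ 2 : ℝ) : ℂ) * b') * Complex.exp (ε * (planeTheta b c p : ℂ)) := by
  unfold pdy
  have h : (fun s : ℝ => b' * Complex.exp (ε * (planeTheta b c (p.1, s, p.2.2) : ℂ)))
      = fun s : ℝ => b' * Complex.exp ((ε * ((2 * b ^ 2 - c ^ 2 : ℝ) : ℂ)) * s +
          ε * ((c * p.1 + (6 * b ^ 2 * c - c ^ 3) * p.2.2 : ℝ) : ℂ)) := by
    funext s
    congr 1
    simp only [planeTheta]
    push_cast
    ring_nf
  rw [h, (hasDerivAt_wave b' _ _ p.2.1).deriv]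
  have h2 : (ε * ((2 * b ^ 2 - c ^ 2 : ℝ) : ℂ)) * (p.2.1 : ℂ) +
      ε * ((c * p.1 + (6 * b ^ 2 * c - c ^ 3) * p.2.2 : ℝ) : ℂ)
      = ε * (planeTheta b c p : ℂ) := by
    simp only [planeTheta]; push_cast; ring
  rw [h2]; ring_nf

lemma pdt_wave (b c : ℝ) (b' ε : ℂ) (p : ℝ × ℝ × ℝ) :
    pdt (fun p => b' * Complex.exp (ε * (planeTheta b c p : ℂ))) p
      = (ε * ((6 * b ^ 2 * c - c ^ 3 : ℝ) : ℂ) * b') * Complex.exp (ε * (planeTheta b c p : ℂ)) := by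
  unfold pdt
  have h : (fun s : ℝ => b' * Complex.exp (ε * (planeTheta b c (p.1, p.2.1, s) : ℂ)))
      = fun s : ℝ => b' * Complex.exp ((ε * ((6 * b ^ 2 * c - c ^ 3 : ℝ) : ℂ)) * s +
          ε * ((c * p.1 + (2 * b ^ 2 - c ^ 2) * p.2.1 : ℝ) : ℂ)) := by
    funext s
    congr 1
    simp only [planeTheta]
    push_cast
    ring_nf
  rw [h, (hasDerivAt_wave b' _ _ p.2.2).deriv]
  have h2 : (ε * ((6 * b ^ 2 * c - c ^ 3 : ℝ) : ℂ)) * (p.2.2 : ℂ) +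
      ε * ((c * p.1 + (2 * b ^ 2 - c ^ 2) * p.2.1 : ℝ) : ℂ)
      = ε * (planeTheta b c p : ℂ) := by
    simp only [planeTheta]; push_cast; ring
  rw [h2]; ring_nf

/-- the plane waves `q = b e^{iθ}`, `r = b e^{−iθ}` satisfy the second
and third AKNS flows on all of `ℝ³`. -/
theorem plane_wave_satisfies_akns (b c : ℝ) :
    let q : ℝ × ℝ × ℝ → ℂ := fun p => (b : ℂ) * Complex.exp (I * (planeTheta b c p : ℂ))
    let r : ℝ × ℝ × ℝ → ℂ := fun p => (b : ℂ) * Complex.exp (-I * (planeTheta b c p : ℂ))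
    (∀ p, I * pdy q p = -pdx (pdx q) p - 2 * (q p) ^ 2 * r p) ∧
    (∀ p, I * pdy r p = pdx (pdx r) p + 2 * q p * (r p) ^ 2) ∧
    (∀ p, pdt q p = pdx (pdx (pdx q)) p + 6 * pdx q p * q p * r p) ∧
    (∀ p, pdt r p = pdx (pdx (pdx r)) p + 6 * q p * r p * pdx r p) := by
  intro q r
  have hx : ∀ b' ε : ℂ, pdx (fun p => b' * Complex.exp (ε * (planeTheta b c p : ℂ)))
      = fun p => (ε * c * b') * Complex.exp (ε * (planeTheta b c p : ℂ)) :=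
    fun b' ε => funext (pdx_wave b c b' ε)
  have hy : ∀ b' ε : ℂ, pdy (fun p => b' * Complex.exp (ε * (planeTheta b c p : ℂ)))
      = fun p => (ε * ((2 * b ^ 2 - c ^ 2 : ℝ) : ℂ) * b') * Complex.exp (ε * (planeTheta b c p : ℂ)) :=
    fun b' ε => funext (pdy_wave b c b' ε)
  have ht : ∀ b' ε : ℂ, pdt (fun p => b' * Complex.exp (ε * (planeTheta b c p : ℂ)))
      = fun p => (ε * ((6 * b ^ 2 * c - c ^ 3 : ℝ) : ℂ) * b') * Complex.exp (ε * (planeTheta b c p : ℂ)) :=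
    fun b' ε => funext (pdt_wave b c b' ε)
  have hI : (I : ℂ) ^ 2 = -1 := Complex.I_sq
  have hEF : ∀ p : ℝ × ℝ × ℝ, Complex.exp (I * (planeTheta b c p : ℂ))
      * Complex.exp (-I * (planeTheta b c p : ℂ)) = 1 := by
    intro p
    rw [← Complex.exp_add]
    have h0 : I * (planeTheta b c p : ℂ) + -I * (planeTheta b c p : ℂ) = 0 := by ring
    rw [h0, Complex.exp_zero]
  refine ⟨fun p => ?_, fun p => ?_, fun p => ?_, fun p => ?_⟩ <;>
    simp only [q, r, hx, hy, ht] <;> push_cast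
  · linear_combination (2 * (b:ℂ)^3 * Complex.exp (I * (planeTheta b c p : ℂ))) * hI
      + (2 * (b:ℂ)^3 * Complex.exp (I * (planeTheta b c p : ℂ))) * hEF p
  · linear_combination (-2 * (b:ℂ)^3 * Complex.exp (-I * (planeTheta b c p : ℂ))) * hI
      + (-2 * (b:ℂ)^3 * Complex.exp (-I * (planeTheta b c p : ℂ))) * hEF p
  · linear_combination (-I * (c:ℂ)^3 * b * Complex.exp (I * (planeTheta b c p : ℂ))) * hI
      + (-6 * I * (c:ℂ) * (b:ℂ)^3 * Complex.exp (I * (planeTheta b c p : ℂ))) * hEF p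
  · linear_combination (I * (c:ℂ)^3 * b * Complex.exp (-I * (planeTheta b c p : ℂ))) * hI
      + (6 * I * (c:ℂ) * (b:ℂ)^3 * Complex.exp (-I * (planeTheta b c p : ℂ))) * hEF p
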